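/- arXiv:2510.12708 — 2 statements merged into one kernel-verified Lean document; each statement's English description precedes it below -/
import Mathlib

section
/- Let d be an even positive integer. Then for every integer i ≥ 1, every weighted-homogeneous polynomial of weighted degree i·d in R lies in the k-subalgebra of R generated by the set of all monomials of weighted degree d. In particular, the d-th Veronese subring R^{(d)} is generated in degree d when d is even. -/
open MvPolynomial

/-- The weighted degree of an exponent vector on the variables of
`R = k[x_0, …, x_{n-1}, y]`, where each `x_j` has degree 1 and `y` has degree 2. -/
def degw (n : ℕ) (σ : (Fin n ⊕ Unit) →₀ ℕ) : ℕ :=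
  (∑ j : Fin n, σ (Sum.inl j)) + 2 * σ (Sum.inr ())

/-- The set of monomials of weighted degree `d` in `R = k[x_0, …, x_{n-1}, y]`. -/
def monoSet (k : Type*) [CommSemiring k] (n d : ℕ) : Set (MvPolynomial (Fin n ⊕ Unit) k) :=
  {p | ∃ σ : (Fin n ⊕ Unit) →₀ ℕ, p = monomial σ (1 : k) ∧ degw n σ = d}

lemma degw_add (n : ℕ) (a b : (Fin n ⊕ Unit) →₀ ℕ) :
    degw n (a + b) = degw n a + degw n b := by
  simp only [degw, Finsupp.add_apply, Finset.sum_add_distrib]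
  ring

lemma exists_le_sum {α : Type*} (f : α →₀ ℕ) (m : ℕ) (h : m ≤ f.sum fun _ v => v) :
    ∃ g : α →₀ ℕ, g ≤ f ∧ g.sum (fun _ v => v) = m := by
  induction m with
  | zero => exact ⟨0, (zero_le : (0 : α →₀ ℕ) ≤ f), by simp⟩
  | succ m ih =>
    obtain ⟨g, hgf, hgs⟩ := ih (le_of_lt (Nat.lt_of_succ_le h))
    have hlt : ∃ a, g a < f a := by
      by_contra hc
      push_neg at hc
      have hfg : f = g := le_antisymm (fun a => hc a) hgf
      rw [hfg, hgs] at h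
      omega
    obtain ⟨a, ha⟩ := hlt
    refine ⟨g + Finsupp.single a 1, ?_, ?_⟩
    · intro b
      rcases eq_or_ne b a with rfl | hba
      · simp only [Finsupp.add_apply, Finsupp.single_eq_same]
        omega
      · simp only [Finsupp.add_apply, Finsupp.single_eq_of_ne' (Ne.symm hba), add_zero]
        exact hgf b
    · rw [Finsupp.sum_add_index' (fun _ => rfl) (fun _ _ _ => rfl), hgs,
        Finsupp.sum_single_index rfl]

lemma exists_split (n d : ℕ) (hd : Even d) (i : ℕ) (hi : 1 ≤ i)
    (σ : (Fin n ⊕ Unit) →₀ ℕ) (hσ : degw n σ = i * d) :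
    ∃ σ₁ : (Fin n ⊕ Unit) →₀ ℕ, σ₁ ≤ σ ∧ degw n σ₁ = d := by
  set A := ∑ j : Fin n, σ (Sum.inl j) with hA
  set b := σ (Sum.inr ()) with hb
  have hAb : A + 2 * b = i * d := hσ
  have hinj : Function.Injective (Sum.inl : Fin n → Fin n ⊕ Unit) := Sum.inl_injective
  set f : Fin n →₀ ℕ := Finsupp.comapDomain Sum.inl σ hinj.injOn with hf
  have hfapp : ∀ j, f j = σ (Sum.inl j) := fun j => rfl
  have hfsum : (f.sum fun _ v => v) = A := by
    rw [Finsupp.sum_fintype _ _ (fun _ => rfl)]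
    exact Finset.sum_congr rfl (fun j _ => hfapp j)
  by_cases hAd : d ≤ A
  · obtain ⟨g, hgf, hgs⟩ := exists_le_sum f d (by rw [hfsum]; exact hAd)
    refine ⟨g.mapDomain Sum.inl, ?_, ?_⟩
    · intro x
      cases x with
      | inl j =>
        rw [Finsupp.mapDomain_apply hinj]
        exact le_trans (hgf j) (le_of_eq (hfapp j))
      | inr u =>
        rw [Finsupp.mapDomain_notin_range]
        · exact Nat.zero_le _
        · rintro ⟨j, hj⟩; exact Sum.inl_ne_inr hj
    · have h1 : ∀ j : Fin n, (g.mapDomain Sum.inl) (Sum.inl j) = g j :=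
        fun j => Finsupp.mapDomain_apply hinj g j
      have h2 : (g.mapDomain Sum.inl) (Sum.inr ()) = 0 := by
        apply Finsupp.mapDomain_notin_range
        rintro ⟨j, hj⟩; exact Sum.inl_ne_inr hj
      simp only [degw, h2, mul_zero, add_zero]
      rw [Finset.sum_congr rfl (fun j _ => h1 j)]
      rw [← hgs, Finsupp.sum_fintype _ _ (fun _ => rfl)]
  · push_neg at hAd
    have hid : Even (i * d) := hd.mul_left i
    have hAeven : Even A := by
      rcases hid with ⟨m, hm⟩
      refine ⟨m - b, ?_⟩
      omega
    have hdA : Even (d - A) := by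
      rcases hd with ⟨m, hm⟩; rcases hAeven with ⟨m', hm'⟩
      exact ⟨m - m', by omega⟩
    set c := (d - A) / 2 with hc
    have hc2 : 2 * c = d - A := by
      rcases hdA with ⟨m, hm⟩
      omega
    have hcb : c ≤ b := by
      have : d ≤ i * d := Nat.le_mul_of_pos_left d hi
      omega
    set τ : (Fin n ⊕ Unit) →₀ ℕ := f.mapDomain Sum.inl + Finsupp.single (Sum.inr ()) c with hτ
    refine ⟨τ, ?_, ?_⟩
    · intro x
      cases x with
      | inl j =>
        rw [hτ]
        simp only [Finsupp.add_apply, Finsupp.mapDomain_apply hinj,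
          Finsupp.single_eq_of_ne' (by simp : (Sum.inr () : Fin n ⊕ Unit) ≠ Sum.inl j), add_zero]
        exact le_of_eq (hfapp j)
      | inr u =>
        have h2 : (f.mapDomain Sum.inl) (Sum.inr u) = 0 := by
          apply Finsupp.mapDomain_notin_range
          rintro ⟨j, hj⟩; exact Sum.inl_ne_inr hj
        rw [hτ]
        simp only [Finsupp.add_apply, h2, zero_add]
        cases u
        simpa using hcb
    · have h1 : ∀ j : Fin n, τ (Sum.inl j) = f j := by
        intro j
        rw [hτ]
        simp only [Finsupp.add_apply, Finsupp.mapDomain_apply hinj,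
          Finsupp.single_eq_of_ne' (by simp : (Sum.inr () : Fin n ⊕ Unit) ≠ Sum.inl j), add_zero]
      have h2 : τ (Sum.inr ()) = c := by
        have h3 : (f.mapDomain Sum.inl) (Sum.inr ()) = 0 := by
          apply Finsupp.mapDomain_notin_range
          rintro ⟨j, hj⟩; exact Sum.inl_ne_inr hj
        rw [hτ]
        simp [Finsupp.add_apply, h3]
      simp only [degw, h2]
      rw [Finset.sum_congr rfl (fun j _ => (h1 j).trans (hfapp j))]
      omega

lemma mono_mem (k : Type*) [Field k] (n d : ℕ) (hd : Even d) :
    ∀ i, 1 ≤ i → ∀ σ : (Fin n ⊕ Unit) →₀ ℕ, degw n σ = i * d →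
      monomial σ (1 : k) ∈ Algebra.adjoin k (monoSet k n d) := by
  intro i
  induction i with
  | zero => omega
  | succ i ih =>
    intro _ σ hσ
    rcases Nat.eq_zero_or_pos i with rfl | hi
    · exact Algebra.subset_adjoin ⟨σ, rfl, by simpa using hσ⟩
    · obtain ⟨σ₁, hle, hσ₁⟩ := exists_split n d hd (i + 1) (by omega) σ hσ
      set σ₂ := σ - σ₁ with hσ₂def
      have hsum : σ₁ + σ₂ = σ := add_tsub_cancel_of_le hle
      have hσ₂ : degw n σ₂ = i * d := by
        have hh := degw_add n σ₁ σ₂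
        rw [hsum, hσ₁] at hh
        have hσ' : degw n σ = i * d + d := by rw [hσ, add_mul, one_mul]
        omega
      have : monomial σ (1 : k) = monomial σ₁ (1 : k) * monomial σ₂ (1 : k) := by
        rw [monomial_mul, one_mul, hsum]
      rw [this]
      exact mul_mem (Algebra.subset_adjoin ⟨σ₁, rfl, hσ₁⟩) (ih hi σ₂ hσ₂)

/-- Let `d` be an even positive integer. Then for every `i ≥ 1`, every
weighted-homogeneous polynomial of weighted degree `i * d` in `R = k[x_0, …, x_{n-1}, y]`
(with `deg x_j = 1`, `deg y = 2`) lies in the `k`-subalgebra generated by the monomials of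
weighted degree `d`. -/
theorem stmt_3 (k : Type*) [Field k] (n : ℕ) (hn : 1 ≤ n) (d : ℕ) (hdpos : 0 < d)
    (hd : Even d) (i : ℕ) (hi : 1 ≤ i) (p : MvPolynomial (Fin n ⊕ Unit) k)
    (hp : ∀ σ ∈ p.support, degw n σ = i * d) :
    p ∈ Algebra.adjoin k (monoSet k n d) := by
  rw [← p.support_sum_monomial_coeff]
  refine Subalgebra.sum_mem _ (fun σ hσ => ?_)
  have : monomial σ (coeff σ p) = (coeff σ p) • monomial σ (1 : k) := by
    rw [smul_monomial, smul_eq_mul, mul_one]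
  rw [this]
  exact Subalgebra.smul_mem _ (mono_mem k n d hd i hi σ (hp σ hσ)) _
end

section
/- Let q ≥ 1 and d ≥ q + 1 be integers. Then the number of functions a : Fin (q+1) → ℕ with a_0 + ⋯ + a_q = d, a_j ≤ d − 1 for all 0 ≤ j ≤ q − 1, and a_q ≤ q, equals C(d+q, q) − C(d−1, q) − q. -/
open Finset

lemma card_adt (k n : ℕ) : (Finset.Nat.antidiagonalTuple k n).card = (k + n - 1).choose n := by
  have e1 : {a : Fin k → ℕ // ∑ i, a i = n} ≃ {f : Fin k →₀ ℕ // (f.sum fun _ => id) = n} :=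
    (Equiv.subtypeEquiv Finsupp.equivFunOnFinite.symm (by
      intro a
      rw [Finsupp.sum_fintype]
      · simp [Finsupp.equivFunOnFinite]; exact Iff.rfl
      · intro; rfl))
  have e2 : {f : Fin k →₀ ℕ // (f.sum fun _ => id) = n} ≃ Sym (Fin k) n :=
    Equiv.subtypeEquiv Multiset.toFinsupp.toEquiv.symm (by
      intro f
      rw [show (Multiset.toFinsupp.toEquiv.symm f : Multiset (Fin k))
          = Finsupp.toMultiset f from rfl, Finsupp.card_toMultiset])
  have h1 : ((Finset.Nat.antidiagonalTuple k n : Finset (Fin k → ℕ)) : Set (Fin k → ℕ))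
      = {a : Fin k → ℕ | ∑ i, a i = n} := by
    ext a; simp [Finset.Nat.mem_antidiagonalTuple]
  have h2 : (Finset.Nat.antidiagonalTuple k n).card
      = Nat.card {a : Fin k → ℕ // ∑ i, a i = n} := by
    rw [← Set.ncard_coe_finset, h1]; exact (Nat.card_coe_set_eq _).symm
  rw [h2, Nat.card_congr (e1.trans e2), Nat.card_eq_fintype_card, Sym.card_sym_eq_choose,
    Fintype.card_fin]

lemma sum_update_aux (q : ℕ) (a : Fin (q + 1) → ℕ) (v : ℕ) :
    (∑ i, Function.update a (Fin.last q) v i) + a (Fin.last q) = v + ∑ i, a i := by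
  rw [Finset.sum_update_of_mem (Finset.mem_univ _), Finset.sdiff_singleton_eq_erase, add_assoc,
    Finset.sum_erase_add _ _ (Finset.mem_univ _)]

/-- For `q ≥ 1` and `d ≥ q + 1`, the number of functions `a : Fin (q+1) → ℕ`
with `a 0 + ⋯ + a q = d`, `a j ≤ d - 1` for `0 ≤ j ≤ q - 1`, and `a q ≤ q`, equals
`C(d+q, q) - C(d-1, q) - q`. -/
theorem stmt_11 (q d : ℕ) (hq : 1 ≤ q) (hd : q + 1 ≤ d) :
    (Set.ncard {a : Fin (q + 1) → ℕ |
        (∑ j, a j) = d ∧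
        (∀ j : Fin (q + 1), ((j : ℕ) < q → a j ≤ d - 1) ∧ ((j : ℕ) = q → a j ≤ q))} : ℤ) =
      ((d + q).choose q : ℤ) - ((d - 1).choose q : ℤ) - (q : ℤ) := by
  classical
  set A := Finset.Nat.antidiagonalTuple (q + 1) d with hA
  set P : (Fin (q + 1) → ℕ) → Prop := fun a =>
    ∀ j : Fin (q + 1), ((j : ℕ) < q → a j ≤ d - 1) ∧ ((j : ℕ) = q → a j ≤ q) with hP
  set B := A.filter (fun a => q + 1 ≤ a (Fin.last q)) with hB
  set C := A.filter (fun a => ∃ j : Fin (q + 1), (j : ℕ) < q ∧ d ≤ a j) with hC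
  -- partition
  have hnot : ∀ a ∈ A, (¬ P a ↔ (q + 1 ≤ a (Fin.last q) ∨ ∃ j : Fin (q + 1), (j : ℕ) < q ∧ d ≤ a j)) := by
    intro a _
    constructor
    · intro hnp
      by_contra hcon
      push_neg at hcon
      obtain ⟨h1, h2⟩ := hcon
      refine hnp ?_
      intro j
      constructor
      · intro hjq
        have := h2 j hjq
        omega
      · intro hjq
        have : j = Fin.last q := Fin.ext (by simpa using hjq)
        rw [this]; omega
    · rintro (h | ⟨j, hjq, hge⟩) hp
      · have := (hp (Fin.last q)).2 (by simp)
        omega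
      · have := (hp j).1 hjq
        omega
  have hBC : A.filter (fun a => ¬ P a) = B ∪ C := by
    ext a
    simp only [mem_filter, hB, hC, mem_union]
    constructor
    · rintro ⟨ha, hnp⟩
      rcases (hnot a ha).mp hnp with h | h
      · exact Or.inl ⟨ha, h⟩
      · exact Or.inr ⟨ha, h⟩
    · rintro (⟨ha, h⟩ | ⟨ha, h⟩) <;>
        exact ⟨ha, (hnot a ha).mpr (by tauto)⟩
  have hdisj : Disjoint B C := by
    rw [Finset.disjoint_left]
    rintro a haB haC
    rw [hB, mem_filter] at haB
    rw [hC, mem_filter] at haC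
    obtain ⟨haA, hlast⟩ := haB
    obtain ⟨-, j, hjq, hdj⟩ := haC
    have hsum : ∑ i, a i = d := by
      rw [hA, Finset.Nat.mem_antidiagonalTuple] at haA; exact haA
    have hne : j ≠ Fin.last q := by
      intro h; rw [h] at hjq; simp only [Fin.val_last] at hjq; omega
    have hpair : a j + a (Fin.last q) ≤ ∑ i, a i := by
      have h1 : ({j, Fin.last q} : Finset (Fin (q + 1))) ⊆ Finset.univ := Finset.subset_univ _
      calc a j + a (Fin.last q) = ∑ i ∈ ({j, Fin.last q} : Finset (Fin (q + 1))), a i :=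
            (Finset.sum_pair hne).symm
        _ ≤ ∑ i, a i := Finset.sum_le_sum_of_subset h1
    omega
  have hpart : (A.filter P).card + (B.card + C.card) = A.card := by
    rw [← Finset.card_union_of_disjoint hdisj, ← hBC,
      Finset.card_filter_add_card_filter_not]
  -- card C = q
  have hCcard : C.card = q := by
    have hCeq : C = (Finset.univ : Finset (Fin q)).image
        (fun j => Pi.single (Fin.castSucc j) d) := by
      ext a
      simp only [hC, mem_filter, mem_image, mem_univ, true_and, hA,
        Finset.Nat.mem_antidiagonalTuple]
      constructor
      · rintro ⟨hsum, j, hjq, hdj⟩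
        have hle : a j ≤ d := hsum ▸ Finset.single_le_sum
          (fun i _ => Nat.zero_le (a i)) (Finset.mem_univ j)
        have haj : a j = d := le_antisymm hle hdj
        have hrest : ∑ i ∈ Finset.univ.erase j, a i = 0 := by
          have h := Finset.add_sum_erase Finset.univ a (Finset.mem_univ j)
          omega
        refine ⟨⟨(j : ℕ), hjq⟩, ?_⟩
        have hcs : Fin.castSucc (⟨(j : ℕ), hjq⟩ : Fin q) = j := Fin.ext rfl
        rw [hcs]
        funext i
        by_cases hij : i = j
        · subst hij; rw [Pi.single_eq_same, haj]
        · rw [Pi.single_eq_of_ne hij]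
          have : a i = 0 := by
            rw [Finset.sum_eq_zero_iff] at hrest
            exact hrest i (Finset.mem_erase.mpr ⟨hij, Finset.mem_univ i⟩)
          rw [this]
      · rintro ⟨j, rfl⟩
        refine ⟨?_, Fin.castSucc j, by simp, by rw [Pi.single_eq_same]⟩
        rw [Finset.sum_pi_single']
        simp
    rw [hCeq, Finset.card_image_of_injective _ ?_, Finset.card_univ, Fintype.card_fin]
    intro x y hxy
    by_contra hne
    have h1 := congrFun hxy (Fin.castSucc x)
    dsimp only at h1
    rw [Pi.single_eq_same, Pi.single_eq_of_ne (by
      simpa [Fin.castSucc_inj] using hne)] at h1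
    omega
  -- card B
  have hBcard : B.card = (d - 1).choose q := by
    have hbij : B.card = (Finset.Nat.antidiagonalTuple (q + 1) (d - (q + 1))).card := by
      apply Finset.card_nbij' (fun a => Function.update a (Fin.last q) (a (Fin.last q) - (q + 1)))
        (fun b => Function.update b (Fin.last q) (b (Fin.last q) + (q + 1)))
      · intro a ha
        simp only [Finset.mem_coe] at ha ⊢
        rw [hB, mem_filter, hA, Finset.Nat.mem_antidiagonalTuple] at ha
        obtain ⟨hsum, hge⟩ := ha
        rw [Finset.Nat.mem_antidiagonalTuple]
        have h := sum_update_aux q a (a (Fin.last q) - (q + 1))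
        omega
      · intro b hb
        simp only [Finset.mem_coe] at hb ⊢
        rw [Finset.Nat.mem_antidiagonalTuple] at hb
        rw [hB, mem_filter, hA, Finset.Nat.mem_antidiagonalTuple]
        have h := sum_update_aux q b (b (Fin.last q) + (q + 1))
        constructor
        · omega
        · rw [Function.update_self]; omega
      · intro a ha
        simp only [Finset.mem_coe] at ha
        beta_reduce
        rw [hB, mem_filter] at ha
        obtain ⟨-, hge⟩ := ha
        rw [Function.update_idem, Function.update_self]
        rw [show a (Fin.last q) - (q + 1) + (q + 1) = a (Fin.last q) by omega]
        exact Function.update_eq_self _ _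
      · intro b hb
        beta_reduce
        rw [Function.update_idem, Function.update_self]
        rw [show b (Fin.last q) + (q + 1) - (q + 1) = b (Fin.last q) by omega]
        exact Function.update_eq_self _ _
    rw [hbij, card_adt]
    have h1 : q + 1 + (d - (q + 1)) - 1 = d - 1 := by omega
    rw [h1, ← Nat.choose_symm (by omega : q ≤ d - 1),
      show d - 1 - q = d - (q + 1) by omega]
  -- card A
  have hAcard : A.card = (d + q).choose q := by
    rw [hA, card_adt, show q + 1 + d - 1 = d + q by omega,
      ← Nat.choose_symm (by omega : q ≤ d + q), show d + q - q = d by omega]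
  -- assemble
  have hgoal : {a : Fin (q + 1) → ℕ |
        (∑ j, a j) = d ∧
        (∀ j : Fin (q + 1), ((j : ℕ) < q → a j ≤ d - 1) ∧ ((j : ℕ) = q → a j ≤ q))}
      = ↑(A.filter P) := by
    ext a
    simp [hA, hP, Finset.Nat.mem_antidiagonalTuple]
  rw [hgoal, Set.ncard_coe_finset]
  rw [hAcard] at hpart
  rw [hBcard, hCcard] at hpart
  omega
end
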